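/- Let K > 6 be an integer and let t_PQ, t_P, t_Q be nonnegative integers with t_PQ ≤ K−1 and t_PQ + t_P + t_Q ≤ K. Define β := K² − 3K + 2t_PQ − (t_PQ(t_PQ−1) + t_PQ(t_P+t_Q) + t_P t_Q). Then β ≥ (1/2)(K − t_PQ)(K − 6) > 0. -/
import Mathlib


theorem beta_lower_bound (K tPQ tP tQ : ℕ) (hK : 6 < K) (htPQ : tPQ ≤ K - 1)
    (hsum : tPQ + tP + tQ ≤ K)
    (β : ℝ)
    (hβ : β = (K : ℝ) ^ 2 - 3 * K + 2 * tPQ -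
      ((tPQ : ℝ) * (tPQ - 1) + tPQ * (tP + tQ) + tP * tQ)) :
    (1 / 2 : ℝ) * ((K : ℝ) - tPQ) * ((K : ℝ) - 6) ≤ β ∧
      0 < (1 / 2 : ℝ) * ((K : ℝ) - tPQ) * ((K : ℝ) - 6) := by
  have h1 : tPQ + 1 ≤ K := by omega
  have h1' : ((tPQ : ℝ)) + 1 ≤ K := by exact_mod_cast h1
  have h2 : ((tPQ : ℝ)) + tP + tQ ≤ K := by exact_mod_cast hsum
  have hK' : (6 : ℝ) < K := by exact_mod_cast hK
  constructor
  · nlinarith [sq_nonneg ((tP : ℝ) - tQ), sq_nonneg ((K : ℝ) - tPQ - tP - tQ),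
      mul_nonneg (Nat.cast_nonneg tPQ : (0:ℝ) ≤ tPQ) (by linarith : (0:ℝ) ≤ (K:ℝ) - tPQ - tP - tQ)]
  · have : (0:ℝ) < (K : ℝ) - tPQ := by linarith
    nlinarith
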